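/- Let c_n = ∏_{j=1}^n (1+α_j) and s_n = Σ_{j=1}^n ∏_{k=0}^{j-1} (1+α_k) (with α₀ = 0, so the empty product equals 1). Then for every n ≥ 1 the solution of the covariance recursion is Σ_n = c_n · R ( R + s_n Σ₀ )⁻¹ Σ₀. -/

import Mathlib

open Matrix Finset

private lemma posDef_add' {d : ℕ} {A B : Matrix (Fin d) (Fin d) ℝ}
    (hA : A.PosDef) (hB : B.PosDef) : (A + B).PosDef := by
  refine ⟨hA.1.add hB.1, fun x hx => ?_⟩
  exact (hA.add hB).2 hx

private lemma posDef_smul' {d : ℕ} {A : Matrix (Fin d) (Fin d) ℝ} {c : ℝ}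
    (hc : 0 < c) (hA : A.PosDef) : (c • A).PosDef := by
  have hH : (c • A).IsHermitian := by
    unfold Matrix.IsHermitian
    rw [conjTranspose_smul, hA.1]
    simp
  refine ⟨hH, fun x hx => ?_⟩
  exact (hA.smul hc).2 hx

/-- Key matrix identity for the induction step. -/
private lemma key_step {d : ℕ} {R S0 : Matrix (Fin d) (Fin d) ℝ}
    (hR : R.PosDef) (hS0 : S0.PosDef) {s c : ℝ} (hs : 0 < s) (hc : 0 < c) :
    R * (R + c • (R * (R + s • S0)⁻¹ * S0))⁻¹ * (c • (R * (R + s • S0)⁻¹ * S0))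
      = c • (R * (R + (s + c) • S0)⁻¹ * S0) := by
  set A : Matrix (Fin d) (Fin d) ℝ := R + s • S0 with hA
  set B : Matrix (Fin d) (Fin d) ℝ := R + (s + c) • S0 with hB
  have hApd : A.PosDef := posDef_add' hR (posDef_smul' hs hS0)
  have hBpd : B.PosDef := posDef_add' hR (posDef_smul' (by linarith) hS0)
  have hRu : IsUnit R.det := (isUnit_iff_isUnit_det _).1 hR.isUnit
  have hAu : IsUnit A.det := (isUnit_iff_isUnit_det _).1 hApd.isUnit
  have hBu : IsUnit B.det := (isUnit_iff_isUnit_det _).1 hBpd.isUnit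
  have hfac : R + c • (R * A⁻¹ * S0) = R * A⁻¹ * B := by
    have : R * A⁻¹ * B = R * A⁻¹ * A + c • (R * A⁻¹ * S0) := by
      rw [hB, hA]
      simp only [Matrix.mul_add, Matrix.mul_smul, add_smul]
      noncomm_ring
    rw [this, Matrix.nonsing_inv_mul_cancel_right _ _ hAu]
  rw [hfac, Matrix.mul_inv_rev, Matrix.mul_inv_rev, Matrix.nonsing_inv_nonsing_inv _ hAu]
  rw [Matrix.mul_smul]
  congr 1
  -- R * (B⁻¹ * (A * R⁻¹)) * (R * A⁻¹ * S0) = R * B⁻¹ * S0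
  calc R * (B⁻¹ * (A * R⁻¹)) * (R * A⁻¹ * S0)
      = R * B⁻¹ * (A * (R⁻¹ * R) * A⁻¹) * S0 := by noncomm_ring
    _ = R * B⁻¹ * S0 := by
        rw [Matrix.nonsing_inv_mul _ hRu, Matrix.mul_one,
          Matrix.mul_nonsing_inv _ hAu, Matrix.mul_one]

/-- Closed-form solution of the regularized-particle-filter covariance recursion
`Σ_n = (1+α_n) R (R+Σ_{n-1})⁻¹ Σ_{n-1}`: with `c_n = ∏_{j=1}^n (1+α_j)` and
`s_n = ∑_{j=1}^n ∏_{k=0}^{j-1} (1+α_k)` (where `α₀ = 0`), one has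
`Σ_n = c_n • R (R + s_n Σ₀)⁻¹ Σ₀` for all `n ≥ 1`. -/
theorem stmt_0 {d : ℕ} (hd : 1 ≤ d)
    (R S0 : Matrix (Fin d) (Fin d) ℝ) (hR : R.PosDef) (hS0pd : S0.PosDef)
    (α : ℕ → ℝ) (hα0 : α 0 = 0) (hαnn : ∀ n, 0 ≤ α n)
    (S : ℕ → Matrix (Fin d) (Fin d) ℝ) (hS0 : S 0 = S0)
    (hrec : ∀ n, S (n + 1) = (1 + α (n + 1)) • (R * (R + S n)⁻¹ * S n)) :
    ∀ n, 1 ≤ n →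
      S n = (∏ j ∈ Icc 1 n, (1 + α j)) •
        (R * (R + (∑ j ∈ Icc 1 n, ∏ k ∈ range j, (1 + α k)) • S0)⁻¹ * S0) := by
  have hpos : ∀ j, (0:ℝ) < 1 + α j := fun j => by have := hαnn j; linarith
  have hcpos : ∀ n, 0 < ∏ j ∈ Icc 1 n, (1 + α j) :=
    fun n => prod_pos fun j _ => hpos j
  have hspos : ∀ n, 1 ≤ n → 0 < ∑ j ∈ Icc 1 n, ∏ k ∈ range j, (1 + α k) := by
    intro n hn
    refine sum_pos (fun j _ => prod_pos fun k _ => hpos k) ?_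
    exact ⟨1, mem_Icc.2 ⟨le_refl 1, hn⟩⟩
  have hrange : ∀ n, ∏ k ∈ range (n+1), (1 + α k) = ∏ j ∈ Icc 1 n, (1 + α j) := by
    intro n
    rw [Finset.range_eq_Ico, Finset.prod_eq_prod_Ico_succ_bot (Nat.succ_pos n), hα0]
    rw [← Finset.Ico_add_one_right_eq_Icc, Nat.succ_eq_add_one]
    ring
  intro n hn
  induction n with
  | zero => omega
  | succ n ih =>
    rcases Nat.eq_or_lt_of_le hn with h1 | h1
    · -- n + 1 = 1
      have hn0 : n = 0 := by omega
      subst hn0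
      rw [hrec 0, hS0]
      simp [Finset.Icc_self, hα0]
    · have hn1 : 1 ≤ n := by omega
      have ihn := ih hn1
      have hkey := key_step hR hS0pd (hspos n hn1) (hcpos n)
      have hsum : ∑ j ∈ Icc 1 (n+1), ∏ k ∈ range j, (1 + α k)
          = (∑ j ∈ Icc 1 n, ∏ k ∈ range j, (1 + α k)) + ∏ j ∈ Icc 1 n, (1 + α j) := by
        rw [Finset.sum_Icc_succ_top (by omega : 1 ≤ n+1), hrange n]
      have hprod : ∏ j ∈ Icc 1 (n+1), (1 + α j)
          = (∏ j ∈ Icc 1 n, (1 + α j)) * (1 + α (n+1)) := by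
        rw [Finset.prod_Icc_succ_top (by omega : 1 ≤ n+1)]
      rw [hrec n, ihn, hsum, hprod, hkey, smul_smul, mul_comm]
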